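/- Let G = (V,E) be a cograph whose vertex set is partitioned into nonempty sets A and B such that every vertex of A is adjacent to every vertex of B (i.e. G is the join G[A] ⊕ G[B]). If both induced subgraphs G[A] and G[B] are threshold graphs, then G is partitionable. -/

import Mathlib

open SimpleGraph

/-- The disjoint union `G ∪ H` of two vertex-disjoint graphs. -/
def gUnion {α β : Type*} (G : SimpleGraph α) (H : SimpleGraph β) : SimpleGraph (α ⊕ β) where
  Adj x y :=
    match x, y with
    | Sum.inl a, Sum.inl b => G.Adj a b
    | Sum.inr a, Sum.inr b => H.Adj a b
    | _, _ => False
  symm := by constructor; rintro (a | a) (b | b) h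
             · exact G.adj_symm h
             · exact h.elim
             · exact h.elim
             · exact H.adj_symm h
  loopless := by constructor; rintro (a | a) h
                 · exact G.irrefl h
                 · exact H.irrefl h

/-- The join `G ⊕ H` of two vertex-disjoint graphs: disjoint union plus all edges across. -/
def gJoin {α β : Type*} (G : SimpleGraph α) (H : SimpleGraph β) : SimpleGraph (α ⊕ β) where
  Adj x y :=
    match x, y with
    | Sum.inl a, Sum.inl b => G.Adj a b
    | Sum.inr a, Sum.inr b => H.Adj a b
    | _, _ => True
  symm := by constructor; rintro (a | a) (b | b) h
             · exact G.adj_symm h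
             · trivial
             · trivial
             · exact H.adj_symm h
  loopless := by constructor; rintro (a | a) h
                 · exact G.irrefl h
                 · exact H.irrefl h

/-- The complete graph `Kₙ`. -/
def KG (n : ℕ) : SimpleGraph (Fin n) := ⊤

/-- The edgeless graph `nK₁` on `n` vertices. -/
def EG (n : ℕ) : SimpleGraph (Fin n) := ⊥

/-- `G` contains `H`, i.e. `H` is isomorphic to an induced subgraph of `G`. -/
def Contains {α β : Type*} (G : SimpleGraph α) (H : SimpleGraph β) : Prop :=
  Nonempty (H ↪g G)

/-- A cograph is a `P₄`-free graph. -/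
def IsCograph {α : Type*} (G : SimpleGraph α) : Prop :=
  ¬ Contains G (pathGraph 4)

/-- `G` is partitionable: its vertex set splits into a part inducing a triangle-free
graph and a part inducing a `P₃`-free graph. -/
def Partitionable {α : Type*} (G : SimpleGraph α) : Prop :=
  ∃ A : Set α, (G.induce A).CliqueFree 3 ∧ ¬ Contains (G.induce Aᶜ) (pathGraph 3)

/-- `G` is monopolar: its vertex set splits into an independent set and a part
inducing a `P₃`-free graph. -/
def Monopolar {α : Type*} (G : SimpleGraph α) : Prop :=
  ∃ A : Set α, (G.induce A).CliqueFree 2 ∧ ¬ Contains (G.induce Aᶜ) (pathGraph 3)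

/-- `G` is (1,2)-partitionable: its vertex set can be partitioned into at most one
clique and at most two independent sets (equivalently, covered by them). -/
def OneTwoPartitionable {α : Type*} (G : SimpleGraph α) : Prop :=
  ∃ C S₁ S₂ : Set α, C ∪ S₁ ∪ S₂ = Set.univ ∧ G.IsClique C ∧
    (G.induce S₁).CliqueFree 2 ∧ (G.induce S₂).CliqueFree 2

/-- A threshold graph is a `(2K₂, C₄, P₄)`-free graph. -/
def IsThreshold {α : Type*} (G : SimpleGraph α) : Prop :=
  ¬ Contains G (gUnion (KG 2) (KG 2)) ∧ ¬ Contains G (cycleGraph 4) ∧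
    ¬ Contains G (pathGraph 4)

/-- The diamond `K₂ ⊕ 2K₁`. -/
def diamond := gJoin (KG 2) (EG 2)

/-- The paw `K₁ ⊕ (K₁ ∪ K₂)`. -/
def paw := gJoin (KG 1) (gUnion (KG 1) (KG 2))

/-- The butterfly `K₁ ⊕ 2K₂`. -/
def butterfly := gJoin (KG 1) (gUnion (KG 2) (KG 2))

def twoK2 := gUnion (KG 2) (KG 2)

def twoK3 := gUnion (KG 3) (KG 3)

def K2uK1 := gUnion (KG 2) (KG 1)


lemma contains_path4 {β : Type*} (H : SimpleGraph β) {a b c d : β}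
    (hab : H.Adj a b) (hbc : H.Adj b c) (hcd : H.Adj c d)
    (hac : ¬H.Adj a c) (had : ¬H.Adj a d) (hbd : ¬H.Adj b d) :
    Contains H (pathGraph 4) := by
  have nab : a ≠ b := hab.ne
  have nbc : b ≠ c := hbc.ne
  have ncd : c ≠ d := hcd.ne
  have nac : a ≠ c := by rintro rfl; exact had hcd
  have nad : a ≠ d := by rintro rfl; exact hac hcd.symm
  have nbd : b ≠ d := by rintro rfl; exact had hab
  have hba : H.Adj b a := hab.symm
  have hcb : H.Adj c b := hbc.symm
  have hdc : H.Adj d c := hcd.symm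
  have hca : ¬H.Adj c a := fun h => hac h.symm
  have hda : ¬H.Adj d a := fun h => had h.symm
  have hdb : ¬H.Adj d b := fun h => hbd h.symm
  refine ⟨⟨⟨![a,b,c,d], ?_⟩, ?_⟩⟩
  · intro i j hij
    fin_cases i <;> fin_cases j <;> simp_all <;> tauto
  · intro i j
    change H.Adj (![a,b,c,d] i) (![a,b,c,d] j) ↔ _
    fin_cases i <;> fin_cases j <;>
      simp [ pathGraph_adj, hab, hbc, hcd, hac, had, hbd, hba, hcb, hdc, hca, hda, hdb] <;>
      decide

lemma contains_cycle4 {β : Type*} (H : SimpleGraph β) {a b c d : β}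
    (hab : H.Adj a b) (hbc : H.Adj b c) (hcd : H.Adj c d) (hda : H.Adj d a)
    (hac : ¬H.Adj a c) (hbd : ¬H.Adj b d) (nac : a ≠ c) (nbd : b ≠ d) :
    Contains H (cycleGraph 4) := by
  have nab : a ≠ b := hab.ne
  have nbc : b ≠ c := hbc.ne
  have ncd : c ≠ d := hcd.ne
  have nda : d ≠ a := hda.ne
  have hba : H.Adj b a := hab.symm
  have hcb : H.Adj c b := hbc.symm
  have hdc : H.Adj d c := hcd.symm
  have had : H.Adj a d := hda.symm
  have hca : ¬H.Adj c a := fun h => hac h.symm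
  have hdb : ¬H.Adj d b := fun h => hbd h.symm
  refine ⟨⟨⟨![a,b,c,d], ?_⟩, ?_⟩⟩
  · intro i j hij
    fin_cases i <;> fin_cases j <;> simp_all
  · intro i j
    change H.Adj (![a,b,c,d] i) (![a,b,c,d] j) ↔ _
    fin_cases i <;> fin_cases j <;>
      simp [ cycleGraph_adj, hab, hbc, hcd, hda, hac, hbd, hba, hcb, hdc, had, hca, hdb] <;>
      decide

@[simp] lemma gUnion_adj_ll {α β : Type*} (G : SimpleGraph α) (H : SimpleGraph β) (a b : α) :
    (gUnion G H).Adj (Sum.inl a) (Sum.inl b) ↔ G.Adj a b := Iff.rfl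
@[simp] lemma gUnion_adj_rr {α β : Type*} (G : SimpleGraph α) (H : SimpleGraph β) (a b : β) :
    (gUnion G H).Adj (Sum.inr a) (Sum.inr b) ↔ H.Adj a b := Iff.rfl
@[simp] lemma gUnion_adj_lr {α β : Type*} (G : SimpleGraph α) (H : SimpleGraph β) (a : α) (b : β) :
    ¬ (gUnion G H).Adj (Sum.inl a) (Sum.inr b) := fun h => h
@[simp] lemma gUnion_adj_rl {α β : Type*} (G : SimpleGraph α) (H : SimpleGraph β) (a : β) (b : α) :
    ¬ (gUnion G H).Adj (Sum.inr a) (Sum.inl b) := fun h => h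

lemma contains_2K2 {β : Type*} (H : SimpleGraph β) {a b c d : β}
    (hab : H.Adj a b) (hcd : H.Adj c d)
    (hac : ¬H.Adj a c) (had : ¬H.Adj a d) (hbc : ¬H.Adj b c) (hbd : ¬H.Adj b d)
    (nac : a ≠ c) (nad : a ≠ d) (nbc : b ≠ c) (nbd : b ≠ d) :
    Contains H (gUnion (KG 2) (KG 2)) := by
  have nab : a ≠ b := hab.ne
  have ncd : c ≠ d := hcd.ne
  have hba : H.Adj b a := hab.symm
  have hdc : H.Adj d c := hcd.symm
  have hca : ¬H.Adj c a := fun h => hac h.symm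
  have hda : ¬H.Adj d a := fun h => had h.symm
  have hcb : ¬H.Adj c b := fun h => hbc h.symm
  have hdb : ¬H.Adj d b := fun h => hbd h.symm
  refine ⟨⟨⟨Sum.elim ![a,b] ![c,d], ?_⟩, ?_⟩⟩
  · rintro (i|i) (j|j) hij <;> fin_cases i <;> fin_cases j <;> simp_all
  · intro i j
    change H.Adj (Sum.elim ![a,b] ![c,d] i) (Sum.elim ![a,b] ![c,d] j) ↔ _
    rcases i with i|i <;> rcases j with j|j <;> fin_cases i <;> fin_cases j <;>
      simp [ KG, hab, hcd, hac, had, hbc, hbd, hba, hdc, hca, hda, hcb, hdb, nab, ncd,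
        nab.symm, ncd.symm]

lemma noAlt {β : Type*} {H : SimpleGraph β} (h : IsThreshold H) {u v x y : β}
    (hux : H.Adj u x) (hvy : H.Adj v y) (huy : ¬H.Adj u y) (hvx : ¬H.Adj v x)
    (nuy : u ≠ y) (nvx : v ≠ x) : False := by
  have nux : u ≠ x := hux.ne
  have nvy : v ≠ y := hvy.ne
  have nxy : x ≠ y := by rintro rfl; exact huy hux
  have nuv : u ≠ v := by rintro rfl; exact hvx hux
  by_cases huv : H.Adj u v <;> by_cases hxy : H.Adj x y
  · -- C4 : x-u-v-y-x
    exact h.2.1 (contains_cycle4 H hux.symm huv hvy hxy.symm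
      (fun h' => hvx h'.symm) huy nvx.symm nuy)
  · -- P4 : x-u-v-y
    exact h.2.2 (contains_path4 H hux.symm huv hvy (fun h' => hvx h'.symm) hxy huy)
  · -- P4 : u-x-y-v
    exact h.2.2 (contains_path4 H hux hxy hvy.symm huy
      huv (fun h' => hvx h'.symm))
  · -- 2K2 : ux, vy
    exact h.1 (contains_2K2 H hux hvy huv huy
      (fun h' => hvx h'.symm) hxy nuv nuy nvx.symm nxy)

lemma threshold_split {β : Type*} [Fintype β] (H : SimpleGraph β) (h : IsThreshold H) :
    ∃ K : Set β, H.IsClique K ∧ ∀ x ∉ K, ∀ y ∉ K, ¬H.Adj x y := by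
  classical
  obtain ⟨K, hKmem, hKmax⟩ := Finset.exists_max_image
    ((Finset.univ : Finset (Finset β)).filter (fun t : Finset β => H.IsClique (t : Set β))) (fun t => t.card)
    ⟨∅, by simp⟩
  have hK : H.IsClique ↑K := (Finset.mem_filter.mp hKmem).2
  have hmax : ∀ t : Finset β, H.IsClique (t : Set β) → t.card ≤ K.card := fun t ht =>
    hKmax t (Finset.mem_filter.mpr ⟨Finset.mem_univ _, ht⟩)
  refine ⟨↑K, hK, ?_⟩
  intro x hx y hy hadj
  have nxy : x ≠ y := hadj.ne
  -- non-neighbours in K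
  have hnonnbr : ∀ z ∉ (K:Set β), ∃ a ∈ K, ¬H.Adj z a := by
    intro z hz
    by_contra hc
    push_neg at hc
    have hcl : H.IsClique ↑(insert z K) := by
      rw [Finset.coe_insert]
      exact hK.insert (fun b hb _ => hc b hb)
    have := hmax _ hcl
    rw [Finset.card_insert_of_notMem (fun hm => hz hm)] at this
    omega
  obtain ⟨a, haK, hax⟩ := hnonnbr x hx
  obtain ⟨b, hbK, hby⟩ := hnonnbr y hy
  have nay : a ≠ y := fun h' => hy (h' ▸ haK)
  have nax : a ≠ x := fun h' => hx (h' ▸ haK)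
  have nbx : b ≠ x := fun h' => hx (h' ▸ hbK)
  have nby : b ≠ y := fun h' => hy (h' ▸ hbK)
  -- case of a common non-neighbour
  have hcommon : ∀ c ∈ K, ¬H.Adj x c → ¬H.Adj y c → False := by
    intro c hcK hxc hyc
    have ncx : c ≠ x := fun h' => hx (h' ▸ hcK)
    have ncy : c ≠ y := fun h' => hy (h' ▸ hcK)
    have hadjall : ∀ e ∈ K, e ≠ c → H.Adj x e ∧ H.Adj y e := by
      intro e heK hec
      constructor
      · by_contra hxe
        exact noAlt h hadj (hK hcK heK hec.symm) hxe (fun h' => hyc h'.symm)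
          (fun h' => hx (h' ▸ heK)) ncy
      · by_contra hye
        exact noAlt h hadj.symm (hK hcK heK hec.symm) hye (fun h' => hxc h'.symm)
          (fun h' => hy (h' ▸ heK)) ncx
    -- build a bigger clique
    have hcl1 : H.IsClique ↑(insert y (K.erase c)) := by
      rw [Finset.coe_insert]
      refine (hK.subset (by simp [Finset.erase_subset])).insert ?_
      intro e he _
      obtain ⟨hec, heK⟩ := Finset.mem_erase.mp he
      exact (hadjall e heK hec).2
    have hcl2 : H.IsClique ↑(insert x (insert y (K.erase c))) := by
      rw [Finset.coe_insert]
      refine hcl1.insert ?_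
      intro e he _
      rcases Finset.mem_insert.mp he with rfl | he'
      · exact hadj
      · obtain ⟨hec, heK⟩ := Finset.mem_erase.mp he'
        exact (hadjall e heK hec).1
    have := hmax _ hcl2
    have h1 : x ∉ insert y (K.erase c) := by
      simp only [Finset.mem_insert, Finset.mem_erase]
      push_neg
      exact ⟨nxy, fun _ => fun hm => absurd hm hx⟩
    have h2 : y ∉ K.erase c := fun hm => hy (Finset.mem_erase.mp hm).2
    rw [Finset.card_insert_of_notMem h1, Finset.card_insert_of_notMem h2,
      Finset.card_erase_of_mem hcK] at this
    have hKpos : 1 ≤ K.card := Finset.card_pos.mpr ⟨c, hcK⟩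
    omega
  by_cases hay : H.Adj y a
  · by_cases hbx : H.Adj x b
    · -- both cross-adjacent : alternating pair b~x, a~y, ¬b~y, ¬a~x
      exact noAlt h hbx.symm hay.symm (fun h' => hby h'.symm) (fun h' => hax h'.symm) nby nax
    · exact hcommon b hbK hbx hby
  · exact hcommon a haK hax hay

theorem stmt_12 {α : Type*} [Fintype α] (G : SimpleGraph α) (hcog : IsCograph G)
    (A : Set α) (hA : A.Nonempty) (hB : Aᶜ.Nonempty)
    (hjoin : ∀ a ∈ A, ∀ b ∈ Aᶜ, G.Adj a b)
    (h1 : IsThreshold (G.induce A)) (h2 : IsThreshold (G.induce Aᶜ)) :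
    Partitionable G := by
  classical
  haveI : Fintype ↥A := (A.toFinite).fintype
  haveI : Fintype ↥Aᶜ := (Aᶜ.toFinite).fintype
  obtain ⟨KA, hKAcl, hKAind⟩ := threshold_split (G.induce A) h1
  obtain ⟨KB, hKBcl, hKBind⟩ := threshold_split (G.induce Aᶜ) h2
  set C : Set α := (fun x : ↥A => (x : α)) '' KA ∪ (fun x : ↥Aᶜ => (x : α)) '' KB with hC
  -- C is a clique of G
  have hCcl : G.IsClique C := by
    rintro u hu w hw huw
    rcases hu with ⟨xa, hxa, rfl⟩ | ⟨xb, hxb, rfl⟩ <;>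
      rcases hw with ⟨ya, hya, rfl⟩ | ⟨yb, hyb, rfl⟩
    · exact hKAcl hxa hya (fun h' => huw (congrArg _ h'))
    · exact hjoin _ xa.2 _ yb.2
    · exact (hjoin _ ya.2 _ xb.2).symm
    · exact hKBcl hxb hyb (fun h' => huw (congrArg _ h'))
  refine ⟨Cᶜ, ?_, ?_⟩
  · -- triangle-free
    intro t ht
    obtain ⟨u, v, w, nuv, nuw, nvw, rfl⟩ := Finset.card_eq_three.mp ht.card_eq
    have huv := ht.isClique (by simp) (by simp) nuv
    have huw := ht.isClique (by simp) (by simp) nuw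
    have hvw := ht.isClique (by simp) (by simp) nvw
    -- adjacent vertices in Cᶜ are never on the same side of A
    have key : ∀ p q : ↥(Cᶜ : Set α), (G.induce Cᶜ).Adj p q →
        ¬((p : α) ∈ A ↔ (q : α) ∈ A) := by
      intro p q hpq hiff
      have hGpq : G.Adj (p : α) (q : α) := hpq
      by_cases hpA : (p : α) ∈ A
      · have hqA : (q : α) ∈ A := hiff.mp hpA
        have hpK : (⟨(p : α), hpA⟩ : ↥A) ∉ KA := fun hm => p.2 (Or.inl ⟨_, hm, rfl⟩)
        have hqK : (⟨(q : α), hqA⟩ : ↥A) ∉ KA := fun hm => q.2 (Or.inl ⟨_, hm, rfl⟩)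
        exact hKAind _ hpK _ hqK hGpq
      · have hqA : (q : α) ∉ A := fun h' => hpA (hiff.mpr h')
        have hpK : (⟨(p : α), hpA⟩ : ↥Aᶜ) ∉ KB := fun hm => p.2 (Or.inr ⟨_, hm, rfl⟩)
        have hqK : (⟨(q : α), hqA⟩ : ↥Aᶜ) ∉ KB := fun hm => q.2 (Or.inr ⟨_, hm, rfl⟩)
        exact hKBind _ hpK _ hqK hGpq
    have k1 := key u v huv
    have k2 := key u w huw
    have k3 := key v w hvw
    tauto
  · -- the complement is a clique, hence P3-free
    rw [compl_compl]
    rintro ⟨e⟩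
    have hne : e 0 ≠ e 2 := fun h' => absurd (e.injective h') (by simp [Fin.ext_iff])
    have hadj : G.Adj ((e 0 : ↥C) : α) ((e 2 : ↥C) : α) :=
      hCcl (e 0).2 (e 2).2 (fun h' => hne (Subtype.ext h'))
    have : (pathGraph 3).Adj 0 2 := e.map_rel_iff.mp hadj
    have h02 : ¬(pathGraph 3).Adj 0 2 := by simp [pathGraph_adj, Fin.ext_iff]
    exact h02 this
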